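/- Let K be a differential field of characteristic zero and t a primitive generator over K (t transcendental, t′ ∈ K, C_{K(t)} = C_K). A polynomial p ∈ K[t] satisfies gcd(p, p′) = 1 if and only if p is squarefree. -/

import Mathlib

/-- Let `K` be a differential field of characteristic zero and `t` a primitive
generator over `K` (transcendental, `t′ ∈ K`, no new constants).  A polynomial
`p ∈ K[t]` is `t`-normal, i.e. `gcd(p, p′) = 1` where `p′ ∈ K[t]` is the
(unique) polynomial representing the derivative of `p(t)`, if and only if `p`
is squarefree. -/
theorem t_normal_iff_squarefree (F : Type*) [Field F] [CharZero F]
    (δ : F → F)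
    (hδadd : ∀ a b : F, δ (a + b) = δ a + δ b)
    (hδmul : ∀ a b : F, δ (a * b) = δ a * b + a * δ b)
    (K : Subfield F) (hK : ∀ a ∈ K, δ a ∈ K)
    (t : F) (htr : Transcendental ↥K t) (ht : δ t ∈ K)
    (hgen : Subfield.closure ((K : Set F) ∪ {t}) = ⊤)
    (hnewconst : ∀ c : F, δ c = 0 → c ∈ K)
    (p q : Polynomial ↥K)
    (hq : δ (Polynomial.aeval t p) = Polynomial.aeval t q) :
    IsCoprime p q ↔ Squarefree p := by
  classical
  have hδ0 : δ 0 = 0 := by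
    have h := hδadd 0 0
    simp only [add_zero] at h
    exact (left_eq_add.mp h)
  have hδ1 : δ 1 = 0 := by
    have h := hδmul 1 1
    simp only [mul_one, one_mul] at h
    exact (left_eq_add.mp h)
  set dK : ↥K → ↥K := fun a => ⟨δ a, hK a a.2⟩ with hdKdef
  have dKval : ∀ a : ↥K, ((dK a : ↥K) : F) = δ a := fun a => rfl
  have dK0 : dK 0 = 0 := Subtype.ext (by rw [dKval]; simpa using hδ0)
  have dK1 : dK 1 = 0 := Subtype.ext (by rw [dKval]; simpa using hδ1)
  have dKadd : ∀ a b : ↥K, dK (a + b) = dK a + dK b := by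
    intro a b; apply Subtype.ext
    push_cast [dKval]
    exact hδadd a b
  set dt : ↥K := ⟨δ t, ht⟩ with hdtdef
  set Pδ : Polynomial ↥K → Polynomial ↥K :=
    fun r => r.sum fun n a => Polynomial.C (dK a) * Polynomial.X ^ n with hPδdef
  set D : Polynomial ↥K → Polynomial ↥K :=
    fun r => Pδ r + Polynomial.C dt * Polynomial.derivative r with hDdef
  have hPδcoeff : ∀ (r : Polynomial ↥K) (m : ℕ), (Pδ r).coeff m = dK (r.coeff m) := by
    intro r m
    rw [hPδdef]
    simp only [Polynomial.coeff_sum, Polynomial.coeff_C_mul, Polynomial.coeff_X_pow]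
    rw [Polynomial.sum]
    simp only [mul_ite, mul_one, mul_zero]
    rw [Finset.sum_ite_eq r.support m (fun n => dK (r.coeff n))]
    by_cases hm : m ∈ r.support
    · rw [if_pos hm]
    · rw [if_neg hm, Polynomial.notMem_support_iff.mp hm, dK0]
  have hPδadd : ∀ f g : Polynomial ↥K, Pδ (f + g) = Pδ f + Pδ g := by
    intro f g
    ext m
    simp [hPδcoeff, dKadd]
  have htpow : ∀ n : ℕ, δ (t ^ (n + 1)) = (n + 1 : ℕ) * t ^ n * δ t := by
    intro n
    induction n with
    | zero => simp
    | succ n ih =>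
      rw [pow_succ, hδmul, ih]
      push_cast
      ring
  have halg : ∀ a : ↥K, (algebraMap (↥K) F) a = (a : F) := fun a => rfl
  have hA : ∀ r : Polynomial ↥K, δ (Polynomial.aeval t r) = Polynomial.aeval t (D r) := by
    intro r
    induction r using Polynomial.induction_on' with
    | add f g hf hg =>
      rw [map_add, hδadd, hf, hg, ← map_add]
      congr 1
      rw [hDdef]
      simp only [hPδadd, Polynomial.derivative_add]
      ring
    | monomial n a =>
      have hPδmon : Pδ (Polynomial.monomial n a) = Polynomial.C (dK a) * Polynomial.X ^ n := by
        ext m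
        simp only [hPδcoeff, Polynomial.coeff_monomial, Polynomial.coeff_C_mul,
          Polynomial.coeff_X_pow]
        rcases eq_or_ne n m with h | h
        · simp [h]
        · simp [h, Ne.symm h, dK0, hδ0]
      rw [hDdef]
      simp only [hPδmon, Polynomial.derivative_monomial]
      rw [Polynomial.aeval_monomial, hδmul]
      simp only [map_add, map_mul, Polynomial.aeval_C, Polynomial.aeval_monomial, map_pow,
        Polynomial.aeval_X, halg, dKval]
      cases n with
      | zero =>
        simp [hδ1]
      | succ n =>
        rw [htpow n]
        push_cast [Nat.add_sub_cancel]
        ring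
  have hinj : Function.Injective (Polynomial.aeval t : Polynomial ↥K →ₐ[↥K] F) :=
    transcendental_iff_injective.mp htr
  have hqD : q = D p := by
    apply hinj
    show Polynomial.aeval t q = Polynomial.aeval t (D p)
    rw [← hq, hA]
  have hDmul : ∀ f g : Polynomial ↥K, D (f * g) = D f * g + f * D g := by
    intro f g
    apply hinj
    show Polynomial.aeval t (D (f * g)) = Polynomial.aeval t (D f * g + f * D g)
    rw [← hA (f * g), map_mul, hδmul, hA f, hA g]
    simp only [map_add, map_mul]
  constructor
  · intro hco
    intro x hx
    obtain ⟨s, hs⟩ := hx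
    have hxp : x ∣ p := ⟨x * s, by rw [hs]; ring⟩
    have hxq : x ∣ q := by
      rw [hqD, hs, hDmul, hDmul]
      refine dvd_add (dvd_mul_of_dvd_left ?_ s) (dvd_mul_of_dvd_left (dvd_mul_right x x) _)
      exact dvd_add (dvd_mul_left x (D x)) (dvd_mul_right x (D x))
    exact hco.isUnit_of_dvd' hxp hxq
  · intro hsf
    by_contra hnc
    have hp0 : p ≠ 0 := by
      rintro rfl
      exact not_squarefree_zero hsf
    have hgu : ¬ IsUnit (EuclideanDomain.gcd p q) :=
      fun h => hnc (EuclideanDomain.gcd_isUnit_iff.mp h)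
    have hg0 : EuclideanDomain.gcd p q ≠ 0 :=
      fun h => hp0 ((EuclideanDomain.gcd_eq_zero_iff.mp h).1)
    obtain ⟨r, hirr, hrg⟩ := WfDvdMonoid.exists_irreducible_factor hgu hg0
    have hr0 : r ≠ 0 := hirr.ne_zero
    have hcu : IsUnit (Polynomial.C r.leadingCoeff⁻¹) :=
      Polynomial.isUnit_C.mpr (isUnit_iff_ne_zero.mpr
        (inv_ne_zero (Polynomial.leadingCoeff_ne_zero.mpr hr0)))
    set m : Polynomial ↥K := r * Polynomial.C r.leadingCoeff⁻¹ with hmdef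
    have hassoc : Associated r m := ⟨hcu.unit, by rw [hmdef, IsUnit.unit_spec]⟩
    have hmirr : Irreducible m := hassoc.irreducible hirr
    have hmono : m.Monic := Polynomial.monic_mul_leadingCoeff_inv hr0
    have hm0 : m ≠ 0 := hmirr.ne_zero
    have hmp : m ∣ p := (hassoc.symm.dvd).trans (hrg.trans (EuclideanDomain.gcd_dvd_left p q))
    have hmq : m ∣ q := (hassoc.symm.dvd).trans (hrg.trans (EuclideanDomain.gcd_dvd_right p q))
    have hn1 : 1 ≤ m.natDegree := hmirr.natDegree_pos
    obtain ⟨s, hps⟩ := hmp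
    have hms : ¬ m ∣ s := by
      intro hd
      obtain ⟨u, hu⟩ := hd
      exact hmirr.not_isUnit (hsf m ⟨u, by rw [hps, hu]; ring⟩)
    have hmDms : m ∣ D m * s := by
      have hq' : q = D m * s + m * D s := by rw [hqD, hps, hDmul]
      rw [hq'] at hmq
      exact (dvd_add_right (dvd_mul_right m (D s))).mp
        (by rwa [add_comm] at hmq)
    have hmDm : m ∣ D m := (hmirr.prime.dvd_mul.mp hmDms).resolve_right hms
    have hdeg : (D m).degree < m.degree := by
      have h1 : (Pδ m).degree < m.degree := by
        rw [Polynomial.degree_eq_natDegree hm0, Polynomial.degree_lt_iff_coeff_zero]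
        intro k hk
        have hk' : m.natDegree ≤ k := by exact_mod_cast hk
        rw [hPδcoeff]
        rcases eq_or_lt_of_le hk' with h | h
        · rw [← h, Polynomial.Monic.coeff_natDegree hmono, dK1]
        · rw [Polynomial.coeff_eq_zero_of_natDegree_lt h, dK0]
      have h2' : (Polynomial.C dt * Polynomial.derivative m).degree ≤
          (Polynomial.derivative m).degree := by
        calc (Polynomial.C dt * Polynomial.derivative m).degree
            ≤ (Polynomial.C dt).degree + (Polynomial.derivative m).degree :=
              Polynomial.degree_mul_le _ _
          _ ≤ 0 + (Polynomial.derivative m).degree :=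
              add_le_add Polynomial.degree_C_le le_rfl
          _ = (Polynomial.derivative m).degree := zero_add _
      have h2 : (Polynomial.C dt * Polynomial.derivative m).degree < m.degree :=
        lt_of_le_of_lt h2' (Polynomial.degree_derivative_lt hm0)
      calc (D m).degree ≤ max (Pδ m).degree (Polynomial.C dt * Polynomial.derivative m).degree :=
            Polynomial.degree_add_le _ _
        _ < m.degree := max_lt h1 h2
    have hDm0 : D m = 0 := Polynomial.eq_zero_of_dvd_of_degree_lt hmDm hdeg
    have hconst : δ (Polynomial.aeval t m) = 0 := by rw [hA, hDm0, map_zero]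
    have hmem : Polynomial.aeval t m ∈ K := hnewconst _ hconst
    apply htr
    refine ⟨m - Polynomial.C ⟨Polynomial.aeval t m, hmem⟩, ?_, ?_⟩
    · intro h
      rw [sub_eq_zero] at h
      rw [h, Polynomial.natDegree_C] at hn1
      omega
    · rw [map_sub, Polynomial.aeval_C, halg, sub_self]
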